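/- For every Lie subalgebra h ⊆ so(n), the Lie algebra g^h acts weakly irreducibly on ℝ^{n+4}: if W ⊆ ℝ^{n+4} is a linear subspace with X·W ⊆ W for every X ∈ g^h, and the restriction of the bilinear form η (with Gram matrix J) to W is nondegenerate, then W = 0 or W = ℝ^{n+4}. -/

import Mathlib

namespace HolPaper

open Matrix

attribute [local instance 100] LieRing.ofAssociativeRing

def p1 (n : ℕ) : Fin (n + 4) := ⟨0, by omega⟩
def p2 (n : ℕ) : Fin (n + 4) := ⟨1, by omega⟩
def ehat {n : ℕ} (i : Fin n) : Fin (n + 4) := ⟨i.1 + 2, by have := i.isLt; omega⟩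
def q1 (n : ℕ) : Fin (n + 4) := ⟨n + 2, by omega⟩
def q2 (n : ℕ) : Fin (n + 4) := ⟨n + 3, by omega⟩
def pp {n : ℕ} (k : Fin 2) : Fin (n + 4) := ⟨k.1, by have := k.isLt; omega⟩
def qq {n : ℕ} (k : Fin 2) : Fin (n + 4) := ⟨n + 2 + k.1, by have := k.isLt; omega⟩

/-- The Gram matrix `J` of the bilinear form `η` of signature `(2, n+2)` in the basis
`p_1, p_2, e_1, …, e_n, q_1, q_2`. -/
def J (n : ℕ) : Matrix (Fin (n + 4)) (Fin (n + 4)) ℝ := fun a b =>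
  (if (a = p1 n ∧ b = q1 n) ∨ (a = q1 n ∧ b = p1 n) then (1 : ℝ) else 0)
  + (if (a = p2 n ∧ b = q2 n) ∨ (a = q2 n ∧ b = p2 n) then (1 : ℝ) else 0)
  + (∑ i : Fin n, if a = ehat i ∧ b = ehat i then (1 : ℝ) else 0)

/-- `so(2, n+2) = { X : Xᵀ J + J X = 0 }`. -/
def so2 (n : ℕ) : Set (Matrix (Fin (n + 4)) (Fin (n + 4)) ℝ) :=
  {X | Xᵀ * J n + J n * X = 0}

/-- The block matrix (blocks of sizes 2, n, 2) with rows of blocks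
`(B, (−Xᵀ; −Yᵀ), ((0,−c),(c,0)))`, `(0, A, (X Y))`, `(0, 0, −Bᵀ)`. -/
def bform (n : ℕ) (B : Matrix (Fin 2) (Fin 2) ℝ) (A : Matrix (Fin n) (Fin n) ℝ)
    (X Y : Fin n → ℝ) (c : ℝ) : Matrix (Fin (n + 4)) (Fin (n + 4)) ℝ := fun a b =>
  (∑ k : Fin 2, ∑ l : Fin 2, if a = pp k ∧ b = pp l then B k l else 0)
  + (∑ j : Fin n, if a = p1 n ∧ b = ehat j then -X j else 0)
  + (∑ j : Fin n, if a = p2 n ∧ b = ehat j then -Y j else 0)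
  + (if a = p1 n ∧ b = q2 n then -c else 0)
  + (if a = p2 n ∧ b = q1 n then c else 0)
  + (∑ i : Fin n, ∑ j : Fin n, if a = ehat i ∧ b = ehat j then A i j else 0)
  + (∑ i : Fin n, if a = ehat i ∧ b = q1 n then X i else 0)
  + (∑ i : Fin n, if a = ehat i ∧ b = q2 n then Y i else 0)
  + (∑ k : Fin 2, ∑ l : Fin 2, if a = qq k ∧ b = qq l then -B l k else 0)

/-- The isotropic plane `span{p_1, p_2} ⊂ ℝ^{n+4}`. -/
def plane (n : ℕ) : Submodule ℝ (Fin (n + 4) → ℝ) :=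
  Submodule.span ℝ {Pi.single (p1 n) 1, Pi.single (p2 n) 1}

/-- The matrix of an element of `g^h` (blocks of sizes 1, 1, n, 1, 1) with data
`A ∈ h`, `X, Y ∈ ℝⁿ`, `c ∈ ℝ`. -/
def ghMat (n : ℕ) (A : Matrix (Fin n) (Fin n) ℝ) (X Y : Fin n → ℝ) (c : ℝ) :
    Matrix (Fin (n + 4)) (Fin (n + 4)) ℝ := fun a b =>
  (∑ j : Fin n, if a = p1 n ∧ b = ehat j then -X j else 0)
  + (∑ j : Fin n, if a = p2 n ∧ b = ehat j then -Y j else 0)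
  + (if a = p1 n ∧ b = q2 n then -c else 0)
  + (if a = p2 n ∧ b = q1 n then c else 0)
  + (∑ i : Fin n, ∑ j : Fin n, if a = ehat i ∧ b = ehat j then A i j else 0)
  + (∑ i : Fin n, if a = ehat i ∧ b = q1 n then X i else 0)
  + (∑ i : Fin n, if a = ehat i ∧ b = q2 n then Y i else 0)

/-- The set `g^h` associated to a set `h` of `n×n` matrices. -/
def gSet (n : ℕ) (h : Set (Matrix (Fin n) (Fin n) ℝ)) :
    Set (Matrix (Fin (n + 4)) (Fin (n + 4)) ℝ) :=
  {M | ∃ A ∈ h, ∃ X Y : Fin n → ℝ, ∃ c : ℝ, M = ghMat n A X Y c}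

/-- The bilinear form `η`. -/
def eta (n : ℕ) (v w : Fin (n + 4) → ℝ) : ℝ := v ⬝ᵥ (J n).mulVec w


variable {n : ℕ}

@[simp] lemma p1_ne_p2 : p1 n ≠ p2 n := by simp [p1, p2, Fin.ext_iff]
@[simp] lemma p2_ne_p1 : p2 n ≠ p1 n := by simp [p1, p2, Fin.ext_iff]
@[simp] lemma p1_ne_q1 : p1 n ≠ q1 n := by simp [p1, q1, Fin.ext_iff]
@[simp] lemma q1_ne_p1 : q1 n ≠ p1 n := by simp [p1, q1, Fin.ext_iff]
@[simp] lemma p1_ne_q2 : p1 n ≠ q2 n := by simp [p1, q2, Fin.ext_iff]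
@[simp] lemma q2_ne_p1 : q2 n ≠ p1 n := by simp [p1, q2, Fin.ext_iff]
@[simp] lemma p2_ne_q1 : p2 n ≠ q1 n := by simp [p2, q1, Fin.ext_iff]
@[simp] lemma q1_ne_p2 : q1 n ≠ p2 n := by simp [p2, q1, Fin.ext_iff]
@[simp] lemma p2_ne_q2 : p2 n ≠ q2 n := by simp [p2, q2, Fin.ext_iff]
@[simp] lemma q2_ne_p2 : q2 n ≠ p2 n := by simp [p2, q2, Fin.ext_iff]
@[simp] lemma q1_ne_q2 : q1 n ≠ q2 n := by simp [q1, q2, Fin.ext_iff]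
@[simp] lemma q2_ne_q1 : q2 n ≠ q1 n := by simp [q1, q2, Fin.ext_iff]
@[simp] lemma ehat_ne_p1 (i : Fin n) : ehat i ≠ p1 n := by simp [ehat, p1, Fin.ext_iff]
@[simp] lemma p1_ne_ehat (i : Fin n) : p1 n ≠ ehat i := by simp [ehat, p1, Fin.ext_iff]
@[simp] lemma ehat_ne_p2 (i : Fin n) : ehat i ≠ p2 n := by simp [ehat, p2, Fin.ext_iff]
@[simp] lemma p2_ne_ehat (i : Fin n) : p2 n ≠ ehat i := by simp [ehat, p2, Fin.ext_iff]
@[simp] lemma ehat_ne_q1 (i : Fin n) : ehat i ≠ q1 n := by have := i.isLt; simp [ehat, q1, Fin.ext_iff]; omega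
@[simp] lemma q1_ne_ehat (i : Fin n) : q1 n ≠ ehat i := by have := i.isLt; simp [ehat, q1, Fin.ext_iff]; omega
@[simp] lemma ehat_ne_q2 (i : Fin n) : ehat i ≠ q2 n := by have := i.isLt; simp [ehat, q2, Fin.ext_iff]; omega
@[simp] lemma q2_ne_ehat (i : Fin n) : q2 n ≠ ehat i := by have := i.isLt; simp [ehat, q2, Fin.ext_iff]; omega
@[simp] lemma ehat_inj (i j : Fin n) : ehat i = ehat j ↔ i = j := by simp [ehat, Fin.ext_iff]

lemma cases5 (a : Fin (n+4)) : a = p1 n ∨ a = p2 n ∨ (∃ i : Fin n, a = ehat i) ∨ a = q1 n ∨ a = q2 n := by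
  have ha := a.isLt
  by_cases h0 : a.1 = 0
  · exact Or.inl (Fin.ext h0)
  by_cases h1 : a.1 = 1
  · exact Or.inr (Or.inl (Fin.ext h1))
  by_cases hq1 : a.1 = n + 2
  · exact Or.inr (Or.inr (Or.inr (Or.inl (Fin.ext hq1))))
  by_cases hq2 : a.1 = n + 3
  · exact Or.inr (Or.inr (Or.inr (Or.inr (Fin.ext hq2))))
  · refine Or.inr (Or.inr (Or.inl ⟨⟨a.1 - 2, by omega⟩, Fin.ext ?_⟩))
    simp only [ehat]
    omega

lemma sum_decomp (f : Fin (n+4) → ℝ) :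
    ∑ a, f a = f (p1 n) + f (p2 n) + (∑ i : Fin n, f (ehat i)) + f (q1 n) + f (q2 n) := by
  classical
  set g : ℕ → ℝ := fun k => if hk : k < n + 4 then f ⟨k, hk⟩ else 0 with hg
  have h1 : ∑ a, f a = ∑ k ∈ Finset.range (n + 4), g k := by
    rw [← Fin.sum_univ_eq_sum_range]
    refine Finset.sum_congr rfl fun a _ => ?_
    simp [hg, a.isLt]
  have h2 : ∑ k ∈ Finset.range (n + 4), g k
      = (∑ k ∈ Finset.range (n + 2), g k) + g (n+2) + g (n+3) := by
    rw [show n + 4 = (n+3)+1 from rfl, Finset.sum_range_succ,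
      show n + 3 = (n+2)+1 from rfl, Finset.sum_range_succ]
  have h3 : ∑ k ∈ Finset.range (n + 2), g k
      = g 0 + g 1 + ∑ k ∈ Finset.range n, g (2 + k) := by
    rw [Finset.range_eq_Ico, ← Finset.sum_Ico_consecutive g (by omega : (0:ℕ) ≤ 2) (by omega : 2 ≤ n+2)]
    have e1 : ∑ k ∈ Finset.Ico 0 2, g k = g 0 + g 1 := by
      rw [Finset.sum_Ico_eq_sum_range]; simp [Finset.sum_range_succ]
    have e2 : ∑ k ∈ Finset.Ico 2 (n+2), g k = ∑ k ∈ Finset.range n, g (2+k) := by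
      rw [Finset.sum_Ico_eq_sum_range]; simp
    rw [e1, e2, Finset.range_eq_Ico]
  have h4 : ∑ k ∈ Finset.range n, g (2 + k) = ∑ i : Fin n, f (ehat i) := by
    rw [← Fin.sum_univ_eq_sum_range (fun k => g (2 + k)) n]
    refine Finset.sum_congr rfl fun i _ => ?_
    have hi : 2 + i.1 < n + 4 := by have := i.isLt; omega
    simp only [hg, dif_pos hi]
    congr 1
    simp [ehat, Fin.ext_iff]; omega
  have gp1 : g 0 = f (p1 n) := by simp [hg]; rfl
  have gp2 : g 1 = f (p2 n) := by simp [hg]; rfl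
  have gq1 : g (n+2) = f (q1 n) := by simp [hg]; rfl
  have gq2 : g (n+3) = f (q2 n) := by simp [hg]; rfl
  rw [h1, h2, h3, h4, gp1, gp2, gq1, gq2]

def eP1 (n : ℕ) : Fin (n+4) → ℝ := Pi.single (p1 n) 1
def eP2 (n : ℕ) : Fin (n+4) → ℝ := Pi.single (p2 n) 1
def eQ1 (n : ℕ) : Fin (n+4) → ℝ := Pi.single (q1 n) 1
def eQ2 (n : ℕ) : Fin (n+4) → ℝ := Pi.single (q2 n) 1
@[simp] lemma eP1_app (a : Fin (n+4)) : eP1 n a = if a = p1 n then 1 else 0 := by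
  simp [eP1, Pi.single_apply]
@[simp] lemma eP2_app (a : Fin (n+4)) : eP2 n a = if a = p2 n then 1 else 0 := by
  simp [eP2, Pi.single_apply]
@[simp] lemma eQ1_app (a : Fin (n+4)) : eQ1 n a = if a = q1 n then 1 else 0 := by
  simp [eQ1, Pi.single_apply]
@[simp] lemma eQ2_app (a : Fin (n+4)) : eQ2 n a = if a = q2 n then 1 else 0 := by
  simp [eQ2, Pi.single_apply]

def E (n : ℕ) (Z : Fin n → ℝ) : Fin (n + 4) → ℝ := fun a => ∑ i, if a = ehat i then Z i else 0

@[simp] lemma E_p1 {Z : Fin n → ℝ} : E n Z (p1 n) = 0 := by simp [E]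
@[simp] lemma E_p2 {Z : Fin n → ℝ} : E n Z (p2 n) = 0 := by simp [E]
@[simp] lemma E_q1 {Z : Fin n → ℝ} : E n Z (q1 n) = 0 := by simp [E]
@[simp] lemma E_q2 {Z : Fin n → ℝ} : E n Z (q2 n) = 0 := by simp [E]
@[simp] lemma E_e {Z : Fin n → ℝ} (i : Fin n) : E n Z (ehat i) = Z i := by
  simp [E, Finset.sum_ite_eq']

variable {A : Matrix (Fin n) (Fin n) ℝ} {X Y : Fin n → ℝ} {c : ℝ} {w : Fin (n+4) → ℝ}

lemma mv_p1 : (ghMat n A X Y c).mulVec w (p1 n)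
    = -(∑ j, X j * w (ehat j)) - c * w (q2 n) := by
  simp [mulVec, dotProduct, ghMat, add_mul, Finset.sum_add_distrib, ite_and,
    Finset.sum_mul, ite_mul, Finset.sum_ite_eq', neg_mul]
  try rw [Finset.sum_comm]
  try simp [Finset.sum_ite_eq']
  try ring

lemma mv_p2 : (ghMat n A X Y c).mulVec w (p2 n)
    = -(∑ j, Y j * w (ehat j)) + c * w (q1 n) := by
  simp [mulVec, dotProduct, ghMat, add_mul, Finset.sum_add_distrib, ite_and,
    Finset.sum_mul, ite_mul, Finset.sum_ite_eq', neg_mul]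
  try rw [Finset.sum_comm]
  try simp [Finset.sum_ite_eq']
  try ring

lemma mv_e (i : Fin n) : (ghMat n A X Y c).mulVec w (ehat i)
    = (∑ j, A i j * w (ehat j)) + X i * w (q1 n) + Y i * w (q2 n) := by
  simp [mulVec, dotProduct, ghMat, add_mul, Finset.sum_add_distrib, ite_and,
    Finset.sum_mul, ite_mul, Finset.sum_ite_eq', Finset.sum_ite_eq, neg_mul]
  try rw [Finset.sum_comm]
  try simp [Finset.sum_ite_eq', Finset.sum_ite_eq]
  try ring

lemma mv_q1 : (ghMat n A X Y c).mulVec w (q1 n) = 0 := by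
  simp [mulVec, dotProduct, ghMat, add_mul, Finset.sum_add_distrib, ite_and,
    Finset.sum_mul, ite_mul, Finset.sum_ite_eq', neg_mul]

lemma mv_q2 : (ghMat n A X Y c).mulVec w (q2 n) = 0 := by
  simp [mulVec, dotProduct, ghMat, add_mul, Finset.sum_add_distrib, ite_and,
    Finset.sum_mul, ite_mul, Finset.sum_ite_eq', neg_mul]

lemma Jmv_p1 : (J n).mulVec w (p1 n) = w (q1 n) := by
  simp [mulVec, dotProduct, J, add_mul, Finset.sum_add_distrib, ite_and,
    Finset.sum_mul, ite_mul, Finset.sum_ite_eq', or_and_right]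

lemma Jmv_p2 : (J n).mulVec w (p2 n) = w (q2 n) := by
  simp [mulVec, dotProduct, J, add_mul, Finset.sum_add_distrib, ite_and,
    Finset.sum_mul, ite_mul, Finset.sum_ite_eq', or_and_right]

lemma Jmv_q1 : (J n).mulVec w (q1 n) = w (p1 n) := by
  simp [mulVec, dotProduct, J, add_mul, Finset.sum_add_distrib, ite_and,
    Finset.sum_mul, ite_mul, Finset.sum_ite_eq', or_and_right]

lemma Jmv_q2 : (J n).mulVec w (q2 n) = w (p2 n) := by
  simp [mulVec, dotProduct, J, add_mul, Finset.sum_add_distrib, ite_and,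
    Finset.sum_mul, ite_mul, Finset.sum_ite_eq', or_and_right]

lemma Jmv_e (i : Fin n) : (J n).mulVec w (ehat i) = w (ehat i) := by
  simp [mulVec, dotProduct, J, add_mul, Finset.sum_add_distrib, ite_and,
    Finset.sum_mul, ite_mul, Finset.sum_ite_eq', Finset.sum_ite_eq, or_and_right]
  try rw [Finset.sum_comm]
  try simp [Finset.sum_ite_eq', Finset.sum_ite_eq]

lemma eta_eq (v w : Fin (n+4) → ℝ) : eta n v w
    = v (p1 n) * w (q1 n) + v (p2 n) * w (q2 n)
      + (∑ i, v (ehat i) * w (ehat i)) + v (q1 n) * w (p1 n) + v (q2 n) * w (p2 n) := by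
  show ∑ a, v a * (J n).mulVec w a = _
  rw [sum_decomp (fun a => v a * (J n).mulVec w a)]
  simp [Jmv_p1, Jmv_p2, Jmv_q1, Jmv_q2, Jmv_e]

lemma vec_eq (v : Fin (n+4) → ℝ) :
    v = v (p1 n) • eP1 n + v (p2 n) • eP2 n
      + E n (fun i => v (ehat i))
      + v (q1 n) • eQ1 n + v (q2 n) • eQ2 n := by
  funext a
  rcases cases5 a with h | h | ⟨i, h⟩ | h | h <;> subst h <;>
    simp [Pi.single_apply]

lemma mvX (Z : Fin n → ℝ) (w : Fin (n+4) → ℝ) :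
    (ghMat n 0 Z 0 0).mulVec w
      = (-(∑ j, Z j * w (ehat j))) • eP1 n + (w (q1 n)) • E n Z := by
  funext a
  rcases cases5 a with h | h | ⟨i, h⟩ | h | h <;> subst h <;>
    simp [mv_p1, mv_p2, mv_e, mv_q1, mv_q2, Pi.single_apply, mul_comm]

lemma mvY (Z : Fin n → ℝ) (w : Fin (n+4) → ℝ) :
    (ghMat n 0 0 Z 0).mulVec w
      = (-(∑ j, Z j * w (ehat j))) • eP2 n + (w (q2 n)) • E n Z := by
  funext a
  rcases cases5 a with h | h | ⟨i, h⟩ | h | h <;> subst h <;>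
    simp [mv_p1, mv_p2, mv_e, mv_q1, mv_q2, Pi.single_apply, mul_comm]

lemma mvC (w : Fin (n+4) → ℝ) :
    (ghMat n 0 0 0 1).mulVec w
      = (-(w (q2 n))) • eP1 n + (w (q1 n)) • eP2 n := by
  funext a
  rcases cases5 a with h | h | ⟨i, h⟩ | h | h <;> subst h <;>
    simp [mv_p1, mv_p2, mv_e, mv_q1, mv_q2, Pi.single_apply]

lemma smul_single_mem {W : Submodule ℝ (Fin (n+4) → ℝ)} {r : ℝ} {v : Fin (n+4) → ℝ}
    (hr : r ≠ 0) (hm : r • v ∈ W) : v ∈ W := by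
  have := W.smul_mem r⁻¹ hm
  rwa [smul_smul, inv_mul_cancel₀ hr, one_smul] at this


/-- For every Lie subalgebra `h ⊆ so(n)`, the Lie algebra `g^h` acts weakly irreducibly on
`ℝ^{n+4}`: every `g^h`-invariant subspace on which `η` is nondegenerate is `0` or everything. -/
theorem statement2 (n : ℕ) (hn : 1 ≤ n) (h : LieSubalgebra ℝ (Matrix (Fin n) (Fin n) ℝ))
    (hskew : ∀ A ∈ h, Aᵀ = -A)
    (W : Submodule ℝ (Fin (n + 4) → ℝ))
    (hinv : ∀ M ∈ gSet n ↑h, ∀ w ∈ W, M.mulVec w ∈ W)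
    (hnondeg : ∀ w ∈ W, (∀ w' ∈ W, eta n w w' = 0) → w = 0) :
    W = ⊥ ∨ W = ⊤ := by
  classical
  by_cases hbot : W = ⊥
  · exact Or.inl hbot
  right
  have hmem : ∀ (X Y : Fin n → ℝ) (c : ℝ), ∀ v ∈ W, (ghMat n 0 X Y c).mulVec v ∈ W := by
    intro X Y c v hv
    exact hinv _ ⟨0, h.zero_mem, X, Y, c, rfl⟩ v hv
  by_cases hqz : ∀ v ∈ W, v (q1 n) = 0 ∧ v (q2 n) = 0
  · exfalso
    apply hbot
    have he : ∀ v ∈ W, ∀ i : Fin n, v (ehat i) = 0 := by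
      intro v hv i
      by_contra hne
      have h1 : (ghMat n 0 (fun j => v (ehat j)) 0 0).mulVec v ∈ W := hmem _ 0 0 v hv
      rw [mvX, (hqz v hv).1, zero_smul, add_zero] at h1
      have hs : (0:ℝ) < ∑ j, v (ehat j) * v (ehat j) :=
        Finset.sum_pos' (fun j _ => mul_self_nonneg _)
          ⟨i, Finset.mem_univ i, mul_self_pos.mpr hne⟩
      have hP1 : eP1 n ∈ W := smul_single_mem (neg_ne_zero.mpr hs.ne') h1
      have h0 : eP1 n = 0 := by
        apply hnondeg _ hP1
        intro w' hw'
        rw [eta_eq]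
        simp [(hqz w' hw').1]
      have h01 : (1:ℝ) = 0 := by
        have := congrFun h0 (p1 n); simpa using this
      norm_num at h01
    rw [Submodule.eq_bot_iff]
    intro v hv
    apply hnondeg v hv
    intro w' hw'
    rw [eta_eq]
    simp [(hqz v hv).1, (hqz v hv).2, (hqz w' hw').1, (hqz w' hw').2, he v hv]
  push_neg at hqz
  obtain ⟨w0, hw0, hq0⟩ := hqz
  have key : eP1 n ∈ W ∧ eP2 n ∈ W ∧ ∀ Z : Fin n → ℝ, E n Z ∈ W := by
    have hc : (ghMat n 0 0 0 1).mulVec w0 ∈ W := hmem 0 0 1 w0 hw0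
    rw [mvC] at hc
    by_cases hα : w0 (q1 n) = 0
    · have hβ : w0 (q2 n) ≠ 0 := hq0 hα
      set Z : Fin n → ℝ := Pi.single ⟨0, hn⟩ 1 with hZ
      have h1 : (ghMat n 0 0 Z 0).mulVec w0 ∈ W := hmem 0 Z 0 w0 hw0
      rw [mvY] at h1
      have h2 := hmem 0 Z 0 _ h1
      rw [mvY] at h2
      simp only [Pi.add_apply, Pi.smul_apply, eP2_app, E_e, E_q2, smul_eq_mul] at h2
      have hsum : ∑ j, Z j * (-(∑ j, Z j * w0 (ehat j)) * (if ehat j = p2 n then 1 else 0)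
          + w0 (q2 n) * Z j) = w0 (q2 n) := by
        simp [hZ, Pi.single_apply, ite_mul, mul_ite, Finset.sum_ite_eq']
      rw [hsum] at h2
      have hP2 : eP2 n ∈ W := by
        refine smul_single_mem (r := -(w0 (q2 n))) (neg_ne_zero.mpr hβ) ?_
        simpa using h2
      have hE : ∀ Z' : Fin n → ℝ, E n Z' ∈ W := by
        intro Z'
        have h3 : (ghMat n 0 0 Z' 0).mulVec w0 ∈ W := hmem 0 Z' 0 w0 hw0
        rw [mvY] at h3
        have h4 := W.sub_mem h3 (W.smul_mem (-(∑ j, Z' j * w0 (ehat j))) hP2)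
        rw [add_sub_cancel_left] at h4
        exact smul_single_mem hβ h4
      have hP1 : eP1 n ∈ W := by
        rw [hα, zero_smul, add_zero] at hc
        exact smul_single_mem (neg_ne_zero.mpr hβ) hc
      exact ⟨hP1, hP2, hE⟩
    · set Z : Fin n → ℝ := Pi.single ⟨0, hn⟩ 1 with hZ
      have h1 : (ghMat n 0 Z 0 0).mulVec w0 ∈ W := hmem Z 0 0 w0 hw0
      rw [mvX] at h1
      have h2 := hmem Z 0 0 _ h1
      rw [mvX] at h2
      simp only [Pi.add_apply, Pi.smul_apply, eP1_app, E_e, E_q1, smul_eq_mul] at h2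
      have hsum : ∑ j, Z j * (-(∑ j, Z j * w0 (ehat j)) * (if ehat j = p1 n then 1 else 0)
          + w0 (q1 n) * Z j) = w0 (q1 n) := by
        simp [hZ, Pi.single_apply, ite_mul, mul_ite, Finset.sum_ite_eq']
      rw [hsum] at h2
      have hP1 : eP1 n ∈ W := by
        refine smul_single_mem (r := -(w0 (q1 n))) (neg_ne_zero.mpr hα) ?_
        simpa using h2
      have hE : ∀ Z' : Fin n → ℝ, E n Z' ∈ W := by
        intro Z'
        have h3 : (ghMat n 0 Z' 0 0).mulVec w0 ∈ W := hmem Z' 0 0 w0 hw0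
        rw [mvX] at h3
        have h4 := W.sub_mem h3 (W.smul_mem (-(∑ j, Z' j * w0 (ehat j))) hP1)
        rw [add_sub_cancel_left] at h4
        exact smul_single_mem hα h4
      have hP2 : eP2 n ∈ W := by
        have h5 := W.sub_mem (W.add_mem hc (W.smul_mem (w0 (q2 n)) hP1)) (by simp : (0:Fin (n+4) → ℝ) ∈ W)
        have heq : (-(w0 (q2 n))) • eP1 n + w0 (q1 n) • eP2 n + w0 (q2 n) • eP1 n - 0
            = w0 (q1 n) • eP2 n := by module
        rw [heq] at h5
        exact smul_single_mem hα h5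
      exact ⟨hP1, hP2, hE⟩
  obtain ⟨hP1, hP2, hE⟩ := key
  have hu : ∀ v ∈ W, v (q1 n) • eQ1 n + v (q2 n) • eQ2 n ∈ W := by
    intro v hv
    have heq : v (q1 n) • eQ1 n + v (q2 n) • eQ2 n
        = v - (v (p1 n) • eP1 n + v (p2 n) • eP2 n + E n (fun i => v (ehat i))) := by
      rw [eq_sub_iff_add_eq]
      conv_rhs => rw [vec_eq v]
      abel
    rw [heq]
    exact W.sub_mem hv (W.add_mem (W.add_mem (W.smul_mem _ hP1) (W.smul_mem _ hP2)) (hE _))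
  have hex : ∃ w' ∈ W, w' (q2 n) * w0 (q1 n) - w0 (q2 n) * w' (q1 n) ≠ 0 := by
    by_contra hall
    push_neg at hall
    have hv0mem : (w0 (q2 n)) • eP1 n - (w0 (q1 n)) • eP2 n ∈ W :=
      W.sub_mem (W.smul_mem _ hP1) (W.smul_mem _ hP2)
    have hv0 : (w0 (q2 n)) • eP1 n - (w0 (q1 n)) • eP2 n = 0 := by
      apply hnondeg _ hv0mem
      intro w' hw'
      rw [eta_eq]
      have := hall w' hw'
      simp only [Pi.sub_apply, Pi.smul_apply, eP1_app, eP2_app, smul_eq_mul]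
      simp
      nlinarith [hall w' hw']
    have hb : w0 (q2 n) = 0 := by
      have := congrFun hv0 (p1 n); simpa using this
    have ha : w0 (q1 n) = 0 := by
      have := congrFun hv0 (p2 n)
      simp at this
      simpa [hb] using this
    exact (hq0 ha) hb
  obtain ⟨w', hw', hd⟩ := hex
  have hu0 := hu w0 hw0
  have hu' := hu w' hw'
  have hQ1 : eQ1 n ∈ W := by
    refine smul_single_mem (r := w' (q2 n) * w0 (q1 n) - w0 (q2 n) * w' (q1 n)) hd ?_
    have hcomb : (w' (q2 n)) • (w0 (q1 n) • eQ1 n + w0 (q2 n) • eQ2 n)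
        - (w0 (q2 n)) • (w' (q1 n) • eQ1 n + w' (q2 n) • eQ2 n)
        = (w' (q2 n) * w0 (q1 n) - w0 (q2 n) * w' (q1 n)) • eQ1 n := by module
    rw [← hcomb]
    exact W.sub_mem (W.smul_mem _ hu0) (W.smul_mem _ hu')
  have hQ2 : eQ2 n ∈ W := by
    refine smul_single_mem (r := w' (q2 n) * w0 (q1 n) - w0 (q2 n) * w' (q1 n)) hd ?_
    have hcomb : (w0 (q1 n)) • (w' (q1 n) • eQ1 n + w' (q2 n) • eQ2 n)
        - (w' (q1 n)) • (w0 (q1 n) • eQ1 n + w0 (q2 n) • eQ2 n)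
        = (w' (q2 n) * w0 (q1 n) - w0 (q2 n) * w' (q1 n)) • eQ2 n := by module
    rw [← hcomb]
    exact W.sub_mem (W.smul_mem _ hu') (W.smul_mem _ hu0)
  rw [Submodule.eq_top_iff']
  intro v
  have hv := vec_eq v
  rw [hv]
  exact W.add_mem (W.add_mem (W.add_mem (W.add_mem (W.smul_mem _ hP1) (W.smul_mem _ hP2))
    (hE _)) (W.smul_mem _ hQ1)) (W.smul_mem _ hQ2)

end HolPaper
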